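/- Let X be a compact ultrametric space and let A, B be nonempty closed subsets of X. Then the Hausdorff distance between A and B equals the minimum of the set { t ≥ 0 : A^t = B^t }, where A^t := { x ∈ X : dist(x,A) ≤ t } is the closed t-neighborhood of A; in particular this minimum is attained. -/

import Mathlib

noncomputable section

/-- Structural theorem for the Hausdorff distance on compact ultrametric spaces:
for nonempty closed subsets `A`, `B`, the Hausdorff distance between `A` and `B` is
the least `t ≥ 0` such that the closed `t`-neighborhoods of `A` and `B` coincide;
in particular this minimum is attained. -/
theorem hausdorffDist_ultrametric_structure (X : Type) [MetricSpace X] [CompactSpace X]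
    (hu : ∀ x y z : X, dist x z ≤ max (dist x y) (dist y z))
    (A B : Set X) (hA : IsClosed A) (hB : IsClosed B)
    (hAne : A.Nonempty) (hBne : B.Nonempty) :
    IsLeast {t : ℝ | 0 ≤ t ∧
        {x : X | Metric.infDist x A ≤ t} = {x : X | Metric.infDist x B ≤ t}}
      (Metric.hausdorffDist A B) := by
  have hAc : IsCompact A := hA.isCompact
  have hBc : IsCompact B := hB.isCompact
  have hbdd : ∀ s : Set X, Bornology.IsBounded s := fun s =>
    (isCompact_univ.isBounded).subset (Set.subset_univ s)
  have hne : EMetric.hausdorffEdist A B ≠ ⊤ :=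
    Metric.hausdorffEdist_ne_top_of_nonempty_of_bounded hAne hBne (hbdd A) (hbdd B)
  set d := Metric.hausdorffDist A B with hd
  constructor
  · refine ⟨Metric.hausdorffDist_nonneg, ?_⟩
    have key : ∀ (S T : Set X), IsCompact S → IsCompact T → S.Nonempty → T.Nonempty →
        EMetric.hausdorffEdist S T ≠ ⊤ →
        ∀ x : X, Metric.infDist x S ≤ Metric.hausdorffDist S T →
          Metric.infDist x T ≤ Metric.hausdorffDist S T := by
      intro S T hSc hTc hSne hTne hne' x hx
      obtain ⟨a, haS, ha⟩ := hSc.exists_infDist_eq_dist hSne x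
      have h1 : dist x a ≤ Metric.hausdorffDist S T := ha ▸ hx
      have h2 : Metric.infDist a T ≤ Metric.hausdorffDist S T :=
        Metric.infDist_le_hausdorffDist_of_mem haS hne'
      obtain ⟨b, hbT, hb⟩ := hTc.exists_infDist_eq_dist hTne a
      have h3 : dist a b ≤ Metric.hausdorffDist S T := hb ▸ h2
      calc Metric.infDist x T ≤ dist x b := Metric.infDist_le_dist_of_mem hbT
        _ ≤ max (dist x a) (dist a b) := hu x a b
        _ ≤ Metric.hausdorffDist S T := max_le h1 h3
    ext x
    simp only [Set.mem_setOf_eq]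
    constructor
    · exact key A B hAc hBc hAne hBne hne x
    · intro hx
      have := key B A hBc hAc hBne hAne (by rwa [show EMetric.hausdorffEdist B A = EMetric.hausdorffEdist A B from EMetric.hausdorffEdist_comm]) x
      rw [Metric.hausdorffDist_comm] at this
      exact this hx
  · rintro t ⟨ht0, hteq⟩
    refine Metric.hausdorffDist_le_of_infDist ht0 ?_ ?_
    · intro a ha
      have : Metric.infDist a A ≤ t := by
        rw [Metric.infDist_zero_of_mem ha]; exact ht0
      have hm : a ∈ {x : X | Metric.infDist x B ≤ t} := hteq ▸ this
      exact hm
    · intro b hb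
      have hbB : Metric.infDist b B ≤ t := by
        rw [Metric.infDist_zero_of_mem hb]; exact ht0
      have : b ∈ {x : X | Metric.infDist x A ≤ t} := by rw [hteq]; exact hbB
      exact this
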